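/- Let B ⊆ A × A × A be a basic set such that either (a) for every (j,k) ∈ {(1,1),(2,1),(2,2)} at least one of (1,j,k) ∈ B or (2,j,k) ∈ B holds, or (b) for every (j,k) ∈ {(1,1),(1,2),(2,2)} at least one of (1,j,k) ∈ B or (2,j,k) ∈ B holds. Then the entropy limit exists and h(B) = ln 2, i.e., ln(ln c_n)/n → ln 2 as n → ∞. -/

import Mathlib

open Filter Real

/-- The set of `n`-blocks of the binary Markov tree-shift over the alphabet `Fin 2`
(symbols `0,1` standing for `1,2`) with basic set `B` of 2-blocks `(i,j,k)`:
labelings of the binary words of length `< n` such that every node `v` of length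
`≤ n-2`, together with its children `v0` and `v1`, forms a pattern in `B`. -/
def Block2 (B : Finset (Fin 2 × Fin 2 × Fin 2)) (n : ℕ) :
    Set ({w : List (Fin 2) // w.length < n} → Fin 2) :=
  {u | ∀ (v : List (Fin 2)) (h : v.length + 2 ≤ n),
    (u ⟨v, by omega⟩,
     u ⟨v ++ [0], by simp; omega⟩,
     u ⟨v ++ [1], by simp; omega⟩) ∈ B}

/-- The `n`-blocks whose root is labeled `i`. -/
def BlockRoot2 (B : Finset (Fin 2 × Fin 2 × Fin 2)) (i : Fin 2) (n : ℕ) :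
    Set ({w : List (Fin 2) // w.length < n} → Fin 2) :=
  {u | u ∈ Block2 B n ∧ ∀ h : 0 < n, u ⟨[], by simpa using h⟩ = i}

-- finiteness of the domain
private def Dmap (n : ℕ) : {w : List (Fin 2) // w.length < n + 1} →
    Unit ⊕ (Fin 2 × {w : List (Fin 2) // w.length < n}) :=
  fun w => match w with
  | ⟨[], _⟩ => Sum.inl ()
  | ⟨b :: t, h⟩ => Sum.inr (b, ⟨t, by simp at h; omega⟩)

private lemma Dmap_inj (n : ℕ) : Function.Injective (Dmap n) := by
  rintro ⟨(_|⟨b,t⟩), h1⟩ ⟨(_|⟨c,s⟩), h2⟩ heq <;> simp [Dmap] at heq ⊢ <;> tauto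

private lemma finiteD : ∀ n, Finite {w : List (Fin 2) // w.length < n}
  | 0 => by
      haveI : IsEmpty {w : List (Fin 2) // w.length < 0} := ⟨fun a => absurd a.2 (by omega)⟩
      infer_instance
  | n + 1 => by
      haveI := finiteD n
      exact Finite.of_injective _ (Dmap_inj n)

instance instFiniteD (n : ℕ) : Finite {w : List (Fin 2) // w.length < n} := finiteD n

lemma cardD_le (n : ℕ) : Nat.card {w : List (Fin 2) // w.length < n} ≤ 2 ^ n - 1 := by
  induction n with
  | zero =>
      haveI : IsEmpty {w : List (Fin 2) // w.length < 0} := ⟨fun a => absurd a.2 (by omega)⟩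
      simp [Nat.card_eq_zero]
  | succ n ih =>
      have h1 := Nat.card_le_card_of_injective _ (Dmap_inj n)
      rw [Nat.card_sum, Nat.card_prod] at h1
      have h2 : Nat.card Unit = 1 := Nat.card_unique
      have h3 : Nat.card (Fin 2) = 2 := by simp
      rw [h2, h3] at h1
      have : 1 ≤ 2 ^ n := Nat.one_le_two_pow
      calc Nat.card {w : List (Fin 2) // w.length < n + 1} ≤ 1 + 2 * Nat.card {w : List (Fin 2) // w.length < n} := h1
        _ ≤ 1 + 2 * (2 ^ n - 1) := by omega
        _ ≤ 2 ^ (n+1) - 1 := by rw [pow_succ]; omega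

def glue (n : ℕ) (i : Fin 2) (u0 u1 : {w : List (Fin 2) // w.length < n} → Fin 2) :
    {w : List (Fin 2) // w.length < n + 1} → Fin 2 :=
  fun w => match w with
  | ⟨[], _⟩ => i
  | ⟨b :: t, h⟩ => (if b = 0 then u0 else u1) ⟨t, by simp at h; omega⟩

lemma glue_nil (n i u0 u1 h) : glue n i u0 u1 ⟨[], h⟩ = i := rfl

lemma glue_cons (n i u0 u1 b t) (ht : List.length t < n) (h) :
    glue n i u0 u1 ⟨b :: t, h⟩ = (if b = 0 then u0 else u1) ⟨t, ht⟩ := rfl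

lemma glue_mem {B : Finset (Fin 2 × Fin 2 × Fin 2)} {n : ℕ} (hn : 1 ≤ n) {i j k : Fin 2}
    (hijk : (i, j, k) ∈ B) {u0 u1 : {w : List (Fin 2) // w.length < n} → Fin 2}
    (h0 : u0 ∈ BlockRoot2 B j n) (h1 : u1 ∈ BlockRoot2 B k n) :
    glue n i u0 u1 ∈ BlockRoot2 B i (n + 1) := by
  refine ⟨?_, fun _ => rfl⟩
  intro v hv
  match v with
  | [] =>
      have e0 : glue n i u0 u1 ⟨[] ++ [0], by simp; omega⟩ = u0 ⟨[], by omega⟩ := rfl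
      have e1 : glue n i u0 u1 ⟨[] ++ [1], by simp; omega⟩ = u1 ⟨[], by omega⟩ := rfl
      rw [e0, e1, glue_nil, h0.2 hn, h1.2 hn]
      exact hijk
  | b :: t =>
      have hlen : t.length + 2 ≤ n := by simp at hv; omega
      have ht : t.length < n := by omega
      have ht0 : (t ++ [0]).length < n := by simp; omega
      have ht1 : (t ++ [1]).length < n := by simp; omega
      show ((if b = 0 then u0 else u1) ⟨t, ht⟩, (if b = 0 then u0 else u1) ⟨t ++ [0], ht0⟩,
        (if b = 0 then u0 else u1) ⟨t ++ [1], ht1⟩) ∈ B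
      by_cases hb : b = 0
      · simp only [if_pos hb]; exact h0.1 t hlen
      · simp only [if_neg hb]; exact h1.1 t hlen

lemma glue_inj {n : ℕ} {i i' : Fin 2} {u0 u1 u0' u1' : {w : List (Fin 2) // w.length < n} → Fin 2}
    (heq : glue n i u0 u1 = glue n i' u0' u1') : u0 = u0' ∧ u1 = u1' := by
  constructor <;> funext w
  · obtain ⟨t, ht⟩ := w
    have := congrFun heq ⟨0 :: t, by simp; omega⟩
    rwa [glue_cons n i u0 u1 0 t ht, glue_cons n i' u0' u1' 0 t ht, if_pos rfl, if_pos rfl] at this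
  · obtain ⟨t, ht⟩ := w
    have := congrFun heq ⟨1 :: t, by simp; omega⟩
    rwa [glue_cons n i u0 u1 1 t ht, glue_cons n i' u0' u1' 1 t ht,
      if_neg (by decide), if_neg (by decide)] at this

lemma root_eq {B : Finset (Fin 2 × Fin 2 × Fin 2)} {n : ℕ} {j : Fin 2}
    {u : {w : List (Fin 2) // w.length < n} → Fin 2} (hn : 0 < n)
    (hu : u ∈ BlockRoot2 B j n) : u ⟨[], by simpa using hn⟩ = j := hu.2 hn

lemma card_split (B : Finset (Fin 2 × Fin 2 × Fin 2)) {n : ℕ} (hn : 1 ≤ n) :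
    Nat.card (BlockRoot2 B 0 n) + Nat.card (BlockRoot2 B 1 n) = Nat.card (Block2 B n) := by
  have hn' : 0 < n := hn
  classical
  let f : (BlockRoot2 B 0 n) ⊕ (BlockRoot2 B 1 n) → (Block2 B n) :=
    fun x => match x with
    | .inl u => ⟨u.1, u.2.1⟩
    | .inr u => ⟨u.1, u.2.1⟩
  have hbij : Function.Bijective f := by
    constructor
    · rintro (u|u) (v|v) heq <;> simp only [f, Subtype.mk.injEq] at heq
      · exact congrArg Sum.inl (Subtype.ext heq)
      · exfalso
        have h0 := root_eq hn' u.2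
        have h1 := root_eq hn' v.2
        rw [heq] at h0; rw [h0] at h1; exact absurd h1 (by decide)
      · exfalso
        have h0 := root_eq hn' u.2
        have h1 := root_eq hn' v.2
        rw [heq] at h0; rw [h0] at h1; exact absurd h1 (by decide)
      · exact congrArg Sum.inr (Subtype.ext heq)
    · rintro ⟨u, hu⟩
      by_cases h : u ⟨[], by simpa using hn'⟩ = 0
      · exact ⟨.inl ⟨u, hu, fun _ => h⟩, rfl⟩
      · have h1 : u ⟨[], by simpa using hn'⟩ = 1 := by omega
        exact ⟨.inr ⟨u, hu, fun _ => h1⟩, rfl⟩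
  have := Nat.card_eq_of_bijective f hbij
  rwa [Nat.card_sum] at this

lemma card_key (B : Finset (Fin 2 × Fin 2 × Fin 2)) {n : ℕ} (hn : 1 ≤ n)
    {i0 i1 i2 : Fin 2} {p0 p1 p2 : Fin 2 × Fin 2}
    (h01 : p0 ≠ p1) (h02 : p0 ≠ p2) (h12 : p1 ≠ p2)
    (m0 : (i0, p0) ∈ B) (m1 : (i1, p1) ∈ B) (m2 : (i2, p2) ∈ B) :
    Nat.card (BlockRoot2 B p0.1 n) * Nat.card (BlockRoot2 B p0.2 n)
      + Nat.card (BlockRoot2 B p1.1 n) * Nat.card (BlockRoot2 B p1.2 n)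
      + Nat.card (BlockRoot2 B p2.1 n) * Nat.card (BlockRoot2 B p2.2 n)
      ≤ Nat.card (Block2 B (n + 1)) := by
  classical
  have hn' : 0 < n := hn
  let T := ((BlockRoot2 B p0.1 n) × (BlockRoot2 B p0.2 n)) ⊕
    (((BlockRoot2 B p1.1 n) × (BlockRoot2 B p1.2 n)) ⊕
     ((BlockRoot2 B p2.1 n) × (BlockRoot2 B p2.2 n)))
  let f : T → (Block2 B (n + 1)) := fun x => match x with
    | .inl (u, v) => ⟨glue n i0 u.1 v.1, (glue_mem hn (by simpa using m0) u.2 v.2).1⟩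
    | .inr (.inl (u, v)) => ⟨glue n i1 u.1 v.1, (glue_mem hn (by simpa using m1) u.2 v.2).1⟩
    | .inr (.inr (u, v)) => ⟨glue n i2 u.1 v.1, (glue_mem hn (by simpa using m2) u.2 v.2).1⟩
  have key : ∀ (i i' : Fin 2) (j k j' k' : Fin 2)
      (u : BlockRoot2 B j n) (v : BlockRoot2 B k n)
      (u' : BlockRoot2 B j' n) (v' : BlockRoot2 B k' n),
      glue n i u.1 v.1 = glue n i' u'.1 v'.1 → (j, k) = (j', k') ∧ u.1 = u'.1 ∧ v.1 = v'.1 := by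
    intro i i' j k j' k' u v u' v' heq
    obtain ⟨e0, e1⟩ := glue_inj heq
    refine ⟨?_, e0, e1⟩
    have hj := root_eq hn' u.2
    have hj' := root_eq hn' u'.2
    have hk := root_eq hn' v.2
    have hk' := root_eq hn' v'.2
    rw [e0] at hj; rw [hj] at hj'
    rw [e1] at hk; rw [hk] at hk'
    rw [hj', hk']
  have hinj : Function.Injective f := by
    rintro (⟨u,v⟩|⟨u,v⟩|⟨u,v⟩) (⟨u',v'⟩|⟨u',v'⟩|⟨u',v'⟩) heq <;>
      simp only [f, Subtype.mk.injEq] at heq <;>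
      obtain ⟨hp, hu, hv⟩ := key _ _ _ _ _ _ _ _ _ _ heq
    · exact congrArg Sum.inl (Prod.ext (Subtype.ext hu) (Subtype.ext hv))
    · exact absurd (Prod.ext_iff.mp hp) (by simpa [Prod.ext_iff] using h01)
    · exact absurd (Prod.ext_iff.mp hp) (by simpa [Prod.ext_iff] using h02)
    · exact absurd (Prod.ext_iff.mp hp) (by
        simpa [Prod.ext_iff] using h01.symm)
    · exact congrArg (Sum.inr ∘ Sum.inl) (Prod.ext (Subtype.ext hu) (Subtype.ext hv))
    · exact absurd (Prod.ext_iff.mp hp) (by simpa [Prod.ext_iff] using h12)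
    · exact absurd (Prod.ext_iff.mp hp) (by simpa [Prod.ext_iff] using h02.symm)
    · exact absurd (Prod.ext_iff.mp hp) (by simpa [Prod.ext_iff] using h12.symm)
    · exact congrArg (Sum.inr ∘ Sum.inr) (Prod.ext (Subtype.ext hu) (Subtype.ext hv))
  have := Nat.card_le_card_of_injective f hinj
  rwa [Nat.card_sum, Nat.card_sum, Nat.card_prod, Nat.card_prod, Nat.card_prod, ← add_assoc]
    at this

lemma two_le_card_one (B : Finset (Fin 2 × Fin 2 × Fin 2)) : 2 ≤ Nat.card (Block2 B 1) := by
  classical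
  let f : Fin 2 → (Block2 B 1) := fun b => ⟨fun _ => b, by intro v hv; omega⟩
  have hinj : Function.Injective f := by
    intro a b heq
    simpa using congrFun (Subtype.ext_iff.mp heq) ⟨[], by simp⟩
  have := Nat.card_le_card_of_injective f hinj
  simpa using this

lemma rec_step (B : Finset (Fin 2 × Fin 2 × Fin 2))
    (hcase :
      ((((0 : Fin 2), (0 : Fin 2), (0 : Fin 2)) ∈ B ∨ ((1 : Fin 2), (0 : Fin 2), (0 : Fin 2)) ∈ B) ∧
       (((0 : Fin 2), (1 : Fin 2), (0 : Fin 2)) ∈ B ∨ ((1 : Fin 2), (1 : Fin 2), (0 : Fin 2)) ∈ B) ∧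
       (((0 : Fin 2), (1 : Fin 2), (1 : Fin 2)) ∈ B ∨ ((1 : Fin 2), (1 : Fin 2), (1 : Fin 2)) ∈ B)) ∨
      ((((0 : Fin 2), (0 : Fin 2), (0 : Fin 2)) ∈ B ∨ ((1 : Fin 2), (0 : Fin 2), (0 : Fin 2)) ∈ B) ∧
       (((0 : Fin 2), (0 : Fin 2), (1 : Fin 2)) ∈ B ∨ ((1 : Fin 2), (0 : Fin 2), (1 : Fin 2)) ∈ B) ∧
       (((0 : Fin 2), (1 : Fin 2), (1 : Fin 2)) ∈ B ∨ ((1 : Fin 2), (1 : Fin 2), (1 : Fin 2)) ∈ B)))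
    {n : ℕ} (hn : 1 ≤ n) :
    3 * Nat.card (Block2 B n) ^ 2 ≤ 4 * Nat.card (Block2 B (n + 1)) := by
  set a := Nat.card (BlockRoot2 B 0 n) with ha
  set b := Nat.card (BlockRoot2 B 1 n) with hb
  have hsplit : a + b = Nat.card (Block2 B n) := card_split B hn
  have hkey : a * a + a * b + b * b ≤ Nat.card (Block2 B (n + 1)) := by
    rcases hcase with ⟨h00|h00, h10|h10, h11|h11⟩ | ⟨h00|h00, h01|h01, h11|h11⟩
    all_goals {
      first
      | ( have := card_key B hn (p0 := (0,0)) (p1 := (1,0)) (p2 := (1,1))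
            (by decide) (by decide) (by decide) ‹_› ‹_› ‹_›
          calc a * a + a * b + b * b = a * a + b * a + b * b := by ring
            _ ≤ _ := this )
      | ( have := card_key B hn (p0 := (0,0)) (p1 := (0,1)) (p2 := (1,1))
            (by decide) (by decide) (by decide) ‹_› ‹_› ‹_›
          exact le_trans (le_of_eq (by ring)) this ) }
  rw [← hsplit]
  nlinarith [hkey, two_mul_le_add_sq a b]

lemma card_le (B : Finset (Fin 2 × Fin 2 × Fin 2)) (n : ℕ) :
    Nat.card (Block2 B n) ≤ 2 ^ 2 ^ n := by
  classical
  have h1 : Nat.card (Block2 B n) ≤ Nat.card ({w : List (Fin 2) // w.length < n} → Fin 2) :=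
    Nat.card_le_card_of_injective _ Subtype.val_injective
  rw [Nat.card_fun] at h1
  have h2 : Nat.card (Fin 2) = 2 := by simp
  rw [h2] at h1
  calc Nat.card (Block2 B n) ≤ 2 ^ Nat.card {w : List (Fin 2) // w.length < n} := h1
    _ ≤ 2 ^ (2 ^ n - 1) := Nat.pow_le_pow_right (by norm_num) (cardD_le n)
    _ ≤ 2 ^ 2 ^ n := Nat.pow_le_pow_right (by norm_num) (Nat.sub_le _ _)

lemma lower_bound (B : Finset (Fin 2 × Fin 2 × Fin 2))
    (hrec : ∀ n, 1 ≤ n → 3 * Nat.card (Block2 B n) ^ 2 ≤ 4 * Nat.card (Block2 B (n + 1)))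
    (n : ℕ) : 4 * 3 ^ 2 ^ n ≤ 3 * Nat.card (Block2 B (n + 1)) * 2 ^ 2 ^ n := by
  induction n with
  | zero =>
      have := two_le_card_one B
      show 4 * 3 ≤ 3 * Nat.card (Block2 B 1) * 2; omega
  | succ n ih =>
      have hstep := hrec (n + 1) (by omega)
      set x := Nat.card (Block2 B (n + 1)) with hx
      set y := Nat.card (Block2 B (n + 2)) with hy
      have e2 : (2:ℕ) ^ 2 ^ (n+1) = (2 ^ 2 ^ n) ^ 2 := by
        rw [← pow_mul, pow_succ]
      have e3 : (3:ℕ) ^ 2 ^ (n+1) = (3 ^ 2 ^ n) ^ 2 := by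
        rw [← pow_mul, pow_succ]
      rw [e2, e3]
      have h1 := Nat.mul_le_mul ih ih
      have h2 := mul_le_mul_left hstep ((2 ^ 2 ^ n) ^ 2)
      nlinarith [h1, h2]

lemma linear_div_tendsto (A C : ℝ) :
    Tendsto (fun n : ℕ => ((n : ℝ) * A + C) / n) atTop (nhds A) := by
  have h : Tendsto (fun n : ℕ => 1 / (n:ℝ)) atTop (nhds 0) := tendsto_one_div_atTop_nhds_zero_nat
  have h2 : Tendsto (fun n : ℕ => A + C * (1 / (n:ℝ))) atTop (nhds (A + C * 0)) :=
    tendsto_const_nhds.add (h.const_mul C)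
  rw [mul_zero, add_zero] at h2
  refine h2.congr' ?_
  filter_upwards [eventually_ge_atTop 1] with n hn
  have hne : (n:ℝ) ≠ 0 := by
    have : (1:ℝ) ≤ (n:ℝ) := by exact_mod_cast hn
    linarith
  field_simp


theorem entropy_aux (B : Finset (Fin 2 × Fin 2 × Fin 2))
    (hcase :
      ((((0 : Fin 2), (0 : Fin 2), (0 : Fin 2)) ∈ B ∨ ((1 : Fin 2), (0 : Fin 2), (0 : Fin 2)) ∈ B) ∧
       (((0 : Fin 2), (1 : Fin 2), (0 : Fin 2)) ∈ B ∨ ((1 : Fin 2), (1 : Fin 2), (0 : Fin 2)) ∈ B) ∧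
       (((0 : Fin 2), (1 : Fin 2), (1 : Fin 2)) ∈ B ∨ ((1 : Fin 2), (1 : Fin 2), (1 : Fin 2)) ∈ B)) ∨
      ((((0 : Fin 2), (0 : Fin 2), (0 : Fin 2)) ∈ B ∨ ((1 : Fin 2), (0 : Fin 2), (0 : Fin 2)) ∈ B) ∧
       (((0 : Fin 2), (0 : Fin 2), (1 : Fin 2)) ∈ B ∨ ((1 : Fin 2), (0 : Fin 2), (1 : Fin 2)) ∈ B) ∧
       (((0 : Fin 2), (1 : Fin 2), (1 : Fin 2)) ∈ B ∨ ((1 : Fin 2), (1 : Fin 2), (1 : Fin 2)) ∈ B))) :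
    Tendsto (fun n : ℕ => Real.log (Real.log (Nat.card (Block2 B n))) / n)
      atTop (nhds (Real.log 2)) := by
  have hrec : ∀ n, 1 ≤ n → 3 * Nat.card (Block2 B n) ^ 2 ≤ 4 * Nat.card (Block2 B (n + 1)) :=
    fun n hn => rec_step B hcase hn
  have hlow := lower_bound B hrec
  have hlog32 : 0 < Real.log (3/2) := Real.log_pos (by norm_num)
  have hlog2 : 0 < Real.log 2 := Real.log_pos (by norm_num)
  have hlo := linear_div_tendsto (Real.log 2) (Real.log (Real.log (3/2)) - Real.log 2)
  have hhi := linear_div_tendsto (Real.log 2) (Real.log (Real.log 2))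
  -- the key pointwise facts for n = m + 1
  have main : ∀ m : ℕ,
      (2:ℝ) ^ m * Real.log (3/2) ≤ Real.log (Nat.card (Block2 B (m+1))) ∧
      Real.log (Nat.card (Block2 B (m+1))) ≤ (2:ℝ) ^ (m+1) * Real.log 2 := by
    intro m
    set c := Nat.card (Block2 B (m+1)) with hc
    have hnat : 3 ^ 2 ^ m ≤ c * 2 ^ 2 ^ m := by
      have h := hlow m
      rw [← hc] at h
      have h' : 3 * (3 ^ 2 ^ m) ≤ 3 * (c * 2 ^ 2 ^ m) :=
        calc 3 * 3 ^ 2 ^ m ≤ 4 * 3 ^ 2 ^ m := mul_le_mul_left (by norm_num) _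
          _ ≤ 3 * c * 2 ^ 2 ^ m := h
          _ = 3 * (c * 2 ^ 2 ^ m) := by ring
      exact Nat.le_of_mul_le_mul_left h' (by norm_num)
    have hc32 : ((3:ℝ)/2) ^ (2^m) ≤ (c : ℝ) := by
      rw [div_pow, div_le_iff₀ (by positivity)]
      exact_mod_cast hnat
    have hcl : (2:ℝ) ^ m * Real.log (3/2) ≤ Real.log c := by
      have h := Real.log_le_log (by positivity) hc32
      rwa [Real.log_pow, Nat.cast_pow, Nat.cast_ofNat] at h
    refine ⟨hcl, ?_⟩
    have hup : (c : ℝ) ≤ (2:ℝ) ^ (2 ^ (m+1)) := by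
      exact_mod_cast card_le B (m+1)
    have hcpos : (0:ℝ) < c := lt_of_lt_of_le (by positivity) hc32
    have h := Real.log_le_log hcpos hup
    rwa [Real.log_pow, Nat.cast_pow, Nat.cast_ofNat] at h
  refine tendsto_of_tendsto_of_tendsto_of_le_of_le' hlo hhi ?_ ?_
  · filter_upwards [eventually_ge_atTop 1] with n hn
    obtain ⟨m, rfl⟩ : ∃ m, n = m + 1 := ⟨n - 1, by omega⟩
    obtain ⟨hcl, hcu⟩ := main m
    have hLpos : (0:ℝ) < (2:ℝ) ^ m * Real.log (3/2) := by positivity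
    have hnum : (m:ℝ) * Real.log 2 + Real.log (Real.log (3/2)) ≤
        Real.log (Real.log (Nat.card (Block2 B (m+1)))) := by
      have h := Real.log_le_log hLpos hcl
      rwa [Real.log_mul (by positivity) (ne_of_gt hlog32), Real.log_pow] at h
    have heq : ((m+1:ℕ):ℝ) * Real.log 2 + (Real.log (Real.log (3/2)) - Real.log 2)
        = (m:ℝ) * Real.log 2 + Real.log (Real.log (3/2)) := by push_cast; ring
    rw [heq]
    gcongr
  · filter_upwards [eventually_ge_atTop 1] with n hn
    obtain ⟨m, rfl⟩ : ∃ m, n = m + 1 := ⟨n - 1, by omega⟩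
    obtain ⟨hcl, hcu⟩ := main m
    have hLpos : (0:ℝ) < (2:ℝ) ^ m * Real.log (3/2) := by positivity
    have hlogcpos : (0:ℝ) < Real.log (Nat.card (Block2 B (m+1))) := lt_of_lt_of_le hLpos hcl
    have hnum : Real.log (Real.log (Nat.card (Block2 B (m+1)))) ≤
        ((m+1:ℕ):ℝ) * Real.log 2 + Real.log (Real.log 2) := by
      have h := Real.log_le_log hlogcpos hcu
      rw [Real.log_mul (by positivity) (ne_of_gt hlog2), Real.log_pow] at h
      push_cast at h ⊢
      linarith
    gcongr

/-- If for every `(j,k)` in `{(1,1),(2,1),(2,2)}` (case (a)) or in `{(1,1),(1,2),(2,2)}`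
(case (b)) at least one of `(1,j,k)` or `(2,j,k)` belongs to `B`, then the entropy limit
exists and equals `ln 2`. (Symbols `1,2` are `0,1 : Fin 2`.) -/
theorem entropy_eq_log_two_of_almost_complementary (B : Finset (Fin 2 × Fin 2 × Fin 2))
    (hcase :
      ((((0 : Fin 2), (0 : Fin 2), (0 : Fin 2)) ∈ B ∨ ((1 : Fin 2), (0 : Fin 2), (0 : Fin 2)) ∈ B) ∧
       (((0 : Fin 2), (1 : Fin 2), (0 : Fin 2)) ∈ B ∨ ((1 : Fin 2), (1 : Fin 2), (0 : Fin 2)) ∈ B) ∧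
       (((0 : Fin 2), (1 : Fin 2), (1 : Fin 2)) ∈ B ∨ ((1 : Fin 2), (1 : Fin 2), (1 : Fin 2)) ∈ B)) ∨
      ((((0 : Fin 2), (0 : Fin 2), (0 : Fin 2)) ∈ B ∨ ((1 : Fin 2), (0 : Fin 2), (0 : Fin 2)) ∈ B) ∧
       (((0 : Fin 2), (0 : Fin 2), (1 : Fin 2)) ∈ B ∨ ((1 : Fin 2), (0 : Fin 2), (1 : Fin 2)) ∈ B) ∧
       (((0 : Fin 2), (1 : Fin 2), (1 : Fin 2)) ∈ B ∨ ((1 : Fin 2), (1 : Fin 2), (1 : Fin 2)) ∈ B))) :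
    Tendsto (fun n : ℕ => Real.log (Real.log (Nat.card (Block2 B n))) / n)
      atTop (nhds (Real.log 2)) :=
  entropy_aux B hcase
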